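/- If f,g : [0,∞) → [0,∞) are s-convex in the second sense for s ∈ (0,1], then (1/(b-a))∫_a^b f(x)g(x) dx ≤ M(a,b)/(2s+1) + N(a,b)·Γ(s+1)²/Γ(2s+2), where M(a,b)=f(a)g(a)+f(b)g(b) and N(a,b)=f(a)g(b)+f(b)g(a). -/

import Mathlib

open MeasureTheory Real

lemma real_beta (s : ℝ) (hs : 0 < s) :
    ∫ t in (0:ℝ)..1, t ^ s * (1 - t) ^ s =
      Real.Gamma (s + 1) ^ 2 / Real.Gamma (2 * s + 2) := by
  have h1 : (0:ℝ) < s + 1 := by linarith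
  have hG2 : 0 < Real.Gamma (2 * s + 2) := Real.Gamma_pos_of_pos (by linarith)
  have key := Complex.Gamma_mul_Gamma_eq_betaIntegral
    (s := (s:ℂ) + 1) (t := (s:ℂ) + 1) (by simp [h1]) (by simp [h1])
  rw [Complex.betaIntegral] at key
  have hcast : (∫ (x : ℝ) in (0:ℝ)..1, (x:ℂ) ^ ((s:ℂ) + 1 - 1) * (1 - (x:ℂ)) ^ ((s:ℂ) + 1 - 1))
      = ((∫ t in (0:ℝ)..1, t ^ s * (1 - t) ^ s : ℝ) : ℂ) := by
    rw [← intervalIntegral.integral_ofReal]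
    apply intervalIntegral.integral_congr
    intro x hx
    rw [Set.uIcc_of_le (by norm_num)] at hx
    have hx0 : (0:ℝ) ≤ x := hx.1
    have hx1 : (0:ℝ) ≤ 1 - x := by linarith [hx.2]
    push_cast
    rw [add_sub_cancel_right, ← Complex.ofReal_cpow hx0, ← Complex.ofReal_one,
      ← Complex.ofReal_sub, ← Complex.ofReal_cpow hx1]
  rw [hcast] at key
  have : ((s:ℂ)+1) + ((s:ℂ)+1) = ((2*s+2 : ℝ) : ℂ) := by push_cast; ring
  rw [this] at key
  have : ((s:ℂ)+1) = ((s+1 : ℝ):ℂ) := by push_cast; ring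
  rw [this, Complex.Gamma_ofReal, Complex.Gamma_ofReal] at key
  have key2 : Real.Gamma (s+1) * Real.Gamma (s+1)
      = Real.Gamma (2*s+2) * ∫ t in (0:ℝ)..1, t ^ s * (1 - t) ^ s := by
    exact_mod_cast key
  field_simp
  rw [sq]
  rw [show (s + 1) * 2 = 2 * s + 2 by ring]
  linarith [key2]

theorem s_convex_product (s : ℝ) (f g : ℝ → ℝ) (a b : ℝ)
    (hs : s ∈ Set.Ioc (0:ℝ) 1)
    (hf : ∀ x ∈ Set.Ici (0:ℝ), 0 ≤ f x)
    (hg : ∀ x ∈ Set.Ici (0:ℝ), 0 ≤ g x)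
    (hconvf : ∀ x ∈ Set.Ici (0:ℝ), ∀ y ∈ Set.Ici (0:ℝ), ∀ t ∈ Set.Icc (0:ℝ) 1,
      f (t * x + (1 - t) * y) ≤ t ^ s * f x + (1 - t) ^ s * f y)
    (hconvg : ∀ x ∈ Set.Ici (0:ℝ), ∀ y ∈ Set.Ici (0:ℝ), ∀ t ∈ Set.Icc (0:ℝ) 1,
      g (t * x + (1 - t) * y) ≤ t ^ s * g x + (1 - t) ^ s * g y)
    (ha : 0 ≤ a) (hab : a < b)
    (hfgint : IntegrableOn (fun x => f x * g x) (Set.Icc a b)) :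
    (1 / (b - a)) * ∫ x in a..b, f x * g x ≤
      (f a * g a + f b * g b) / (2 * s + 1) +
      (f a * g b + f b * g a) * (Real.Gamma (s + 1)) ^ 2 / Real.Gamma (2 * s + 2) := by
  obtain ⟨hs0, hs1⟩ := hs
  have hb : (0:ℝ) ≤ b := le_of_lt (lt_of_le_of_lt ha hab)
  have hba : (0:ℝ) < b - a := by linarith
  have hcne : a - b ≠ 0 := by linarith
  set F : ℝ → ℝ := fun x => f x * g x with hF
  have hFint : IntervalIntegrable F volume a b := by
    rw [intervalIntegrable_iff_integrableOn_Icc_of_le hab.le]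
    exact hfgint
  -- change of variables
  have hcv : (∫ t in (0:ℝ)..1, F ((a - b) * t + b)) = (1 / (b - a)) * ∫ x in a..b, F x := by
    rw [intervalIntegral.integral_comp_mul_add F hcne b]
    simp only [mul_zero, zero_add, mul_one, smul_eq_mul]
    rw [show a - b + b = a from by ring, intervalIntegral.integral_symm a b]
    field_simp
    ring
  -- integrability of pullback
  have hpull : IntervalIntegrable (fun t => F ((a - b) * t + b)) volume 0 1 := by
    have h1 := (hFint.symm.comp_add_right b).comp_mul_left (c := a - b)
    have e0 : (b - b) / (a - b) = 0 := by rw [sub_self, zero_div]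
    have e1 : (a - b) / (a - b) = 1 := div_self hcne
    simpa [e0, e1] using h1
  have hconts : Continuous fun t : ℝ => t ^ s :=
    continuous_iff_continuousAt.mpr fun x => Real.continuousAt_rpow_const x s (Or.inr hs0.le)
  have hcont1s : Continuous fun t : ℝ => (1 - t) ^ s :=
    hconts.comp (continuous_const.sub continuous_id)
  set H : ℝ → ℝ := fun t => (t ^ s * f a + (1 - t) ^ s * f b) *
      (t ^ s * g a + (1 - t) ^ s * g b) with hH
  have hHcont : Continuous H := by
    apply Continuous.mul <;>
      exact ((hconts.mul continuous_const).add (hcont1s.mul continuous_const))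
  have hHint : IntervalIntegrable H volume 0 1 := hHcont.intervalIntegrable 0 1
  have hfa0 : 0 ≤ f a := hf a (Set.mem_Ici.mpr ha)
  have hfb0 : 0 ≤ f b := hf b (Set.mem_Ici.mpr hb)
  have hga0 : 0 ≤ g a := hg a (Set.mem_Ici.mpr ha)
  have hgb0 : 0 ≤ g b := hg b (Set.mem_Ici.mpr hb)
  -- pointwise bound
  have hmono : (∫ t in (0:ℝ)..1, F ((a - b) * t + b)) ≤ ∫ t in (0:ℝ)..1, H t := by
    apply intervalIntegral.integral_mono_on zero_le_one hpull hHint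
    intro t ht
    have hmem : (a - b) * t + b = t * a + (1 - t) * b := by ring
    have hx : t * a + (1 - t) * b ∈ Set.Ici (0:ℝ) := by
      have h1 : 0 ≤ t * a := mul_nonneg ht.1 ha
      have h2 : 0 ≤ (1 - t) * b := mul_nonneg (by linarith [ht.2]) hb
      simp only [Set.mem_Ici]; linarith
    have hfbnd := hconvf a (Set.mem_Ici.mpr ha) b (Set.mem_Ici.mpr hb) t ht
    have hgbnd := hconvg a (Set.mem_Ici.mpr ha) b (Set.mem_Ici.mpr hb) t ht
    have hgnn : 0 ≤ g (t * a + (1 - t) * b) := hg _ hx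
    have hts0 : 0 ≤ t ^ s := Real.rpow_nonneg ht.1 s
    have h1ts0 : 0 ≤ (1 - t) ^ s := Real.rpow_nonneg (by linarith [ht.2]) s
    simp only [hF, hmem]
    calc f (t * a + (1 - t) * b) * g (t * a + (1 - t) * b)
        ≤ (t ^ s * f a + (1 - t) ^ s * f b) * g (t * a + (1 - t) * b) :=
          mul_le_mul_of_nonneg_right hfbnd hgnn
      _ ≤ H t := by
          apply mul_le_mul_of_nonneg_left hgbnd
          exact add_nonneg (mul_nonneg hts0 hfa0) (mul_nonneg h1ts0 hfb0)
  -- compute ∫ H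
  have h2s : (∫ t in (0:ℝ)..1, t ^ s * t ^ s) = 1 / (2 * s + 1) := by
    have e : ∀ t ∈ Set.uIcc (0:ℝ) 1, t ^ s * t ^ s = t ^ (2*s) := by
      intro t ht
      rw [Set.uIcc_of_le (zero_le_one)] at ht
      rw [← Real.rpow_add' ht.1 (by linarith)]
      ring_nf
    rw [intervalIntegral.integral_congr e, integral_rpow (Or.inl (by linarith))]
    rw [Real.one_rpow, Real.zero_rpow (by linarith)]
    ring
  have h2s' : (∫ t in (0:ℝ)..1, (1-t) ^ s * (1-t) ^ s) = 1 / (2 * s + 1) := by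
    have h := intervalIntegral.integral_comp_sub_left (a := 0) (b := 1)
      (fun u : ℝ => u ^ s * u ^ s) 1
    simp only [sub_self, sub_zero] at h
    rw [← h2s]
    exact h
  have i1 : IntervalIntegrable (fun t : ℝ => (t ^ s * t ^ s) * (f a * g a)) volume 0 1 :=
    ((hconts.mul hconts).mul continuous_const).intervalIntegrable 0 1
  have i2 : IntervalIntegrable
      (fun t : ℝ => (t ^ s * (1-t) ^ s) * (f a * g b + f b * g a)) volume 0 1 :=
    ((hconts.mul hcont1s).mul continuous_const).intervalIntegrable 0 1
  have i3 : IntervalIntegrable (fun t : ℝ => ((1-t) ^ s * (1-t) ^ s) * (f b * g b)) volume 0 1 :=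
    ((hcont1s.mul hcont1s).mul continuous_const).intervalIntegrable 0 1
  have hHval : (∫ t in (0:ℝ)..1, H t)
      = (f a * g a) / (2*s+1) + (f a * g b + f b * g a) *
        (Real.Gamma (s + 1) ^ 2 / Real.Gamma (2 * s + 2)) + (f b * g b) / (2*s+1) := by
    have hHeq : ∀ t ∈ Set.uIcc (0:ℝ) 1, H t = (t ^ s * t ^ s) * (f a * g a)
        + (t ^ s * (1-t) ^ s) * (f a * g b + f b * g a)
        + ((1-t) ^ s * (1-t) ^ s) * (f b * g b) := by
      intro t _; simp only [hH]; ring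
    rw [intervalIntegral.integral_congr hHeq,
      intervalIntegral.integral_add (i1.add i2) i3,
      intervalIntegral.integral_add i1 i2,
      intervalIntegral.integral_mul_const, intervalIntegral.integral_mul_const,
      intervalIntegral.integral_mul_const, h2s, h2s', real_beta s hs0]
    ring
  calc (1 / (b - a)) * ∫ x in a..b, F x
      = ∫ t in (0:ℝ)..1, F ((a - b) * t + b) := hcv.symm
    _ ≤ ∫ t in (0:ℝ)..1, H t := hmono
    _ = _ := by rw [hHval]; ring
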